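/- Let X and Y be invertible n×n complex matrices, set Z = XY, and let f₁, f₂ : Matrix (Fin n) (Fin n) ℂ → ℂ be Fréchet differentiable at Z. Let ρ_Y(M) = M·Y and λ_X(M) = X·M. Then for arbitrary ℂ-linear endomorphisms R, R', R'' of the space of n×n complex matrices, the following identity holds: {f₁∘ρ_Y, f₂∘ρ_Y}_{R',R}(X) + {f₁∘λ_X, f₂∘λ_X}_{R,R''}(Y) = {f₁, f₂}_{R',R''}(Z). (This is the identity expressing that the multiplication map G_{r',r} × G_{r,r''} → G_{r',r''} is Poisson.) -/

import Mathlib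

open Matrix

noncomputable section

attribute [local instance] Matrix.normedAddCommGroup Matrix.normedSpace

/-- The left gradient: `∇ᴸf(M) i j = Df(M)(M ⬝ E_{ji})`. -/
def gradL {n : ℕ} (f : Matrix (Fin n) (Fin n) ℂ → ℂ) (M : Matrix (Fin n) (Fin n) ℂ) :
    Matrix (Fin n) (Fin n) ℂ :=
  fun i j => fderiv ℂ f M (M * Matrix.single j i 1)

/-- The right gradient: `∇ᴿf(M) i j = Df(M)(E_{ji} ⬝ M)`. -/
def gradR {n : ℕ} (f : Matrix (Fin n) (Fin n) ℂ → ℂ) (M : Matrix (Fin n) (Fin n) ℂ) :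
    Matrix (Fin n) (Fin n) ℂ :=
  fun i j => fderiv ℂ f M (Matrix.single j i 1 * M)

/-- The bracket `{f₁, f₂}_{P,Q}(M) = tr(Q(∇ᴸf₁)·∇ᴸf₂) − tr(P(∇ᴿf₁)·∇ᴿf₂)`. -/
def bracket {n : ℕ}
    (P Q : Matrix (Fin n) (Fin n) ℂ →ₗ[ℂ] Matrix (Fin n) (Fin n) ℂ)
    (f₁ f₂ : Matrix (Fin n) (Fin n) ℂ → ℂ) (M : Matrix (Fin n) (Fin n) ℂ) : ℂ :=
  Matrix.trace (Q (gradL f₁ M) * gradL f₂ M) - Matrix.trace (P (gradR f₁ M) * gradR f₂ M)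

lemma fderiv_rmul {n : ℕ} (f : Matrix (Fin n) (Fin n) ℂ → ℂ)
    (X Y : Matrix (Fin n) (Fin n) ℂ) (hf : DifferentiableAt ℂ f (X * Y))
    (ξ : Matrix (Fin n) (Fin n) ℂ) :
    fderiv ℂ (fun M => f (M * Y)) X ξ = fderiv ℂ f (X * Y) (ξ * Y) := by
  set L : Matrix (Fin n) (Fin n) ℂ →L[ℂ] Matrix (Fin n) (Fin n) ℂ :=
    (LinearMap.mulRight ℂ Y).toContinuousLinearMap with hLdef
  have h : (fun M => f (M * Y)) = f ∘ L := rfl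
  rw [h]
  erw [fderiv_comp X hf L.differentiableAt, L.fderiv]
  rfl

lemma fderiv_lmul {n : ℕ} (f : Matrix (Fin n) (Fin n) ℂ → ℂ)
    (X Y : Matrix (Fin n) (Fin n) ℂ) (hf : DifferentiableAt ℂ f (X * Y))
    (ξ : Matrix (Fin n) (Fin n) ℂ) :
    fderiv ℂ (fun M => f (X * M)) Y ξ = fderiv ℂ f (X * Y) (X * ξ) := by
  set L : Matrix (Fin n) (Fin n) ℂ →L[ℂ] Matrix (Fin n) (Fin n) ℂ :=
    (LinearMap.mulLeft ℂ X).toContinuousLinearMap with hLdef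
  have h : (fun M => f (X * M)) = f ∘ L := rfl
  have hc := fderiv_comp (𝕜 := ℂ) Y (show DifferentiableAt ℂ f (L Y) from hf) L.differentiableAt
  rw [h]
  erw [hc, L.fderiv]
  rfl

/-- The multiplication map `G_{r',r} × G_{r,r''} → G_{r',r''}` is Poisson:
`{f₁∘ρ_Y, f₂∘ρ_Y}_{R',R}(X) + {f₁∘λ_X, f₂∘λ_X}_{R,R''}(Y) = {f₁, f₂}_{R',R''}(XY)`. -/
theorem multiplication_is_poisson {n : ℕ} (X Y : Matrix (Fin n) (Fin n) ℂ)
    (hX : IsUnit X) (hY : IsUnit Y)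
    (f₁ f₂ : Matrix (Fin n) (Fin n) ℂ → ℂ)
    (hf₁ : DifferentiableAt ℂ f₁ (X * Y)) (hf₂ : DifferentiableAt ℂ f₂ (X * Y))
    (R R' R'' : Matrix (Fin n) (Fin n) ℂ →ₗ[ℂ] Matrix (Fin n) (Fin n) ℂ) :
    bracket R' R (fun M => f₁ (M * Y)) (fun M => f₂ (M * Y)) X
      + bracket R R'' (fun M => f₁ (X * M)) (fun M => f₂ (X * M)) Y
      = bracket R' R'' f₁ f₂ (X * Y) := by
  have hL1 : gradL (fun M => f₁ (M * Y)) X = fun i j => fderiv ℂ f₁ (X * Y) (X * Matrix.single j i 1 * Y) := by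
    funext i j
    simp only [gradL, fderiv_rmul f₁ X Y hf₁]
  have hL2 : gradL (fun M => f₂ (M * Y)) X = fun i j => fderiv ℂ f₂ (X * Y) (X * Matrix.single j i 1 * Y) := by
    funext i j
    simp only [gradL, fderiv_rmul f₂ X Y hf₂]
  have hR1 : gradR (fun M => f₁ (M * Y)) X = gradR f₁ (X * Y) := by
    funext i j
    simp only [gradR, fderiv_rmul f₁ X Y hf₁, mul_assoc]
  have hR2 : gradR (fun M => f₂ (M * Y)) X = gradR f₂ (X * Y) := by
    funext i j
    simp only [gradR, fderiv_rmul f₂ X Y hf₂, mul_assoc]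
  have hL1' : gradL (fun M => f₁ (X * M)) Y = gradL f₁ (X * Y) := by
    funext i j
    simp only [gradL, fderiv_lmul f₁ X Y hf₁, mul_assoc]
  have hL2' : gradL (fun M => f₂ (X * M)) Y = gradL f₂ (X * Y) := by
    funext i j
    simp only [gradL, fderiv_lmul f₂ X Y hf₂, mul_assoc]
  have hR1' : gradR (fun M => f₁ (X * M)) Y = fun i j => fderiv ℂ f₁ (X * Y) (X * Matrix.single j i 1 * Y) := by
    funext i j
    simp only [gradR, fderiv_lmul f₁ X Y hf₁, mul_assoc]
  have hR2' : gradR (fun M => f₂ (X * M)) Y = fun i j => fderiv ℂ f₂ (X * Y) (X * Matrix.single j i 1 * Y) := by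
    funext i j
    simp only [gradR, fderiv_lmul f₂ X Y hf₂, mul_assoc]
  simp only [bracket, hL1, hL2, hR1, hR2, hL1', hL2', hR1', hR2']
  ring
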